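/- Let D be a symmetric positive definite M×M real matrix. There exists an orthonormal basis b_1,…,b_{M-1} of the hyperplane Υ = {x : x_M = 0} and a unit vector b_M = Dn/|Dn| (with n = e_M) such that in the basis (b_1,…,b_M) the bilinear form associated to D is diagonal with strictly positive diagonal entries. -/

import Mathlib

/-- There is a basis consisting of an orthonormal basis of the hyperplane
`{x : x_M = 0}` together with the unit vector `b_M = D n / |D n|` (with
`n = e_M`) in which the bilinear form associated to the symmetric positive
definite matrix `D` is diagonal with strictly positive diagonal entries, i.e.
`D = ∑ i 𝒟 i • (b i ⊗ b i)` with `𝒟 i > 0`. -/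
theorem diagonalizing_basis_with_boundary_vector (M : ℕ)
    (D : Matrix (Fin (M + 1)) (Fin (M + 1)) ℝ) (hD : D.PosDef) :
    ∃ (b : Fin (M + 1) → (Fin (M + 1) → ℝ)) (𝒟 : Fin (M + 1) → ℝ),
      (∀ i, 0 < 𝒟 i) ∧
      (∀ γ : Fin M, b γ.castSucc (Fin.last M) = 0) ∧
      (∀ γ γ' : Fin M,
        ∑ k, b γ.castSucc k * b γ'.castSucc k = if γ = γ' then 1 else 0) ∧
      (b (Fin.last M) = fun i =>
        D.mulVec (Pi.single (Fin.last M) 1) i /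
          Real.sqrt (∑ k, (D.mulVec (Pi.single (Fin.last M) 1) k) ^ 2)) ∧
      (∀ k l, D k l = ∑ i, 𝒟 i * b i k * b i l) := by
  classical
  set L := Fin.last M with hL
  set v : Fin (M+1) → ℝ := D.mulVec (Pi.single L 1) with hv
  have hvi : ∀ i, v i = D i L := by
    intro i; simp [hv, Matrix.mulVec_single]
  have hsym : ∀ i j, D i j = D j i := by
    intro i j
    have := hD.1
    rw [Matrix.IsHermitian] at this
    conv_lhs => rw [← this]
    simp [Matrix.conjTranspose_apply]
  have hd : 0 < D L L := by
    have h := hD.dotProduct_mulVec_pos (x := Pi.single L 1) (by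
      intro h
      have := congrFun h L
      simp [Pi.single_apply] at this)
    simpa [dotProduct, Pi.single_apply, ← hv, hvi] using h
  set d : ℝ := D L L with hdd
  set S : Matrix (Fin M) (Fin M) ℝ :=
    Matrix.of (fun γ γ' => D γ.castSucc γ'.castSucc - v γ.castSucc * v γ'.castSucc / d) with hS
  have hSsym : S.IsHermitian := by
    rw [Matrix.IsHermitian]
    ext γ γ'
    simp [hS, Matrix.conjTranspose_apply, hsym γ.castSucc γ'.castSucc]
    ring
  have hSpd : S.PosDef := by
    refine Matrix.PosDef.of_dotProduct_mulVec_pos hSsym ?_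
    intro x hx
    set P : ℝ := ∑ γ, v γ.castSucc * x γ with hP
    set c : ℝ := P / d with hc
    set y : Fin (M+1) → ℝ := Fin.snoc x (-c) with hy
    have hy0 : y ≠ 0 := by
      intro h
      apply hx
      ext γ
      have := congrFun h γ.castSucc
      simpa [hy, Fin.snoc_castSucc] using this
    have hpos := hD.dotProduct_mulVec_pos hy0
    have key : dotProduct (star y) (D.mulVec y) = dotProduct (star x) (S.mulVec x) := by
      simp only [star_trivial]
      have expand : ∀ (A : Matrix (Fin (M+1)) (Fin (M+1)) ℝ) (z : Fin (M+1) → ℝ),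
          dotProduct z (A.mulVec z) = ∑ k, ∑ l, z k * A k l * z l := by
        intro A z
        simp [dotProduct, Matrix.mulVec, Finset.mul_sum, mul_assoc, mul_comm, mul_left_comm]
      have expand2 : ∀ (B : Matrix (Fin M) (Fin M) ℝ) (z : Fin M → ℝ),
          dotProduct z (B.mulVec z) = ∑ k, ∑ l, z k * B k l * z l := by
        intro B z
        simp [dotProduct, Matrix.mulVec, Finset.mul_sum, mul_assoc, mul_comm, mul_left_comm]
      rw [expand, expand2]
      rw [Fin.sum_univ_castSucc]
      simp only [Fin.sum_univ_castSucc (n := M)]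
      simp only [hy, Fin.snoc_castSucc, Fin.snoc_last, hS, Matrix.of_apply]
      have hvL : v L = d := by rw [hvi]
      have hDL : ∀ γ : Fin M, D L γ.castSucc = v γ.castSucc := by
        intro γ; rw [hsym]; exact (hvi _).symm
      have hDR : ∀ γ : Fin M, D γ.castSucc L = v γ.castSucc := by
        intro γ; exact (hvi _).symm
      have hdL : D (Fin.last M) (Fin.last M) = d := rfl
      simp only [hDL, hDR, hvL, hdL]
      have e1 : ∑ γ : Fin M, ∑ γ' : Fin M, x γ * (v γ.castSucc * v γ'.castSucc / d) * x γ'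
          = P * P / d := by
        rw [hP, Finset.sum_mul_sum, Finset.sum_div]
        apply Finset.sum_congr rfl
        intro γ _
        rw [Finset.sum_div]
        apply Finset.sum_congr rfl
        intro γ' _
        ring
      have e2 : ∑ γ : Fin M, (x γ * (v γ.castSucc) * (-c)) = -c * P := by
        rw [hP, Finset.mul_sum]; apply Finset.sum_congr rfl; intro γ _; ring
      have e3 : ∑ γ' : Fin M, -c * (v γ'.castSucc) * x γ' = -c * P := by
        rw [hP, Finset.mul_sum]; apply Finset.sum_congr rfl; intro γ _; ring
      have erhs : ∑ γ : Fin M, ∑ γ' : Fin M,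
          x γ * (D γ.castSucc γ'.castSucc - v γ.castSucc * v γ'.castSucc / d) * x γ'
          = (∑ γ : Fin M, ∑ γ' : Fin M, x γ * D γ.castSucc γ'.castSucc * x γ') - P * P / d := by
        rw [← e1, ← Finset.sum_sub_distrib]
        apply Finset.sum_congr rfl
        intro γ _
        rw [← Finset.sum_sub_distrib]
        apply Finset.sum_congr rfl
        intro γ' _
        ring
      simp only [← hL, hDL, hDR]
      rw [erhs, Finset.sum_add_distrib, e2, e3]
      have hd0 : d ≠ 0 := ne_of_gt hd
      rw [hc]
      field_simp
      ring
    rw [key] at hpos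
    exact hpos
  -- spectral theorem for S
  set u : Fin M → (Fin M → ℝ) := fun γ => ⇑(hSsym.eigenvectorBasis γ) with hu
  set lam : Fin M → ℝ := hSsym.eigenvalues with hlam
  have hlampos : ∀ γ, 0 < lam γ := fun γ => hSpd.eigenvalues_pos γ
  have huorth : ∀ γ γ' : Fin M, ∑ k, u γ k * u γ' k = if γ = γ' then 1 else 0 := by
    intro γ γ'
    have h := hSsym.eigenvectorBasis.orthonormal
    rw [orthonormal_iff_ite] at h
    have h2 := h γ γ'
    rw [← h2]
    simp [PiLp.inner_apply, RCLike.inner_apply, hu, mul_comm]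
  have hSentry : ∀ j j' : Fin M, S j j' = ∑ γ, lam γ * u γ j * u γ j' := by
    intro j j'
    conv_lhs => rw [hSsym.spectral_theorem]
    rw [Unitary.conjStarAlgAut_apply]
    rw [Matrix.mul_apply]
    apply Finset.sum_congr rfl
    intro γ _
    simp only [Matrix.mul_diagonal, Matrix.star_apply,
      Matrix.IsHermitian.eigenvectorUnitary_apply, Function.comp_apply, RCLike.ofReal_real_eq_id,
      id_eq, star_trivial, hu, hlam]
    ring
  -- the norm-squared of v
  have hvL : v L = d := by rw [hvi]
  set s : ℝ := ∑ k, v k ^ 2 with hsdef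
  have hspos : 0 < s := by
    have h1 : v L ^ 2 ≤ s :=
      Finset.single_le_sum (f := fun k => v k ^ 2) (fun k _ => sq_nonneg _) (Finset.mem_univ L)
    nlinarith
  have hsq : Real.sqrt s ≠ 0 := (Real.sqrt_pos.mpr hspos).ne'
  have hss : Real.sqrt s * Real.sqrt s = s := Real.mul_self_sqrt hspos.le
  have hd0 : d ≠ 0 := ne_of_gt hd
  refine ⟨Fin.lastCases (fun i => v i / Real.sqrt s) (fun γ => Fin.snoc (u γ) 0),
      Fin.lastCases (s / d) lam, ?_, ?_, ?_, ?_, ?_⟩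
  · intro i
    induction i using Fin.lastCases with
    | last => simpa using div_pos hspos hd
    | cast γ => simpa using hlampos γ
  · intro γ
    simp [hL]
  · intro γ γ'
    simp only [Fin.lastCases_castSucc]
    rw [Fin.sum_univ_castSucc]
    simpa using huorth γ γ'
  · simp [hL]
  · intro k l
    rw [Fin.sum_univ_castSucc]
    simp only [Fin.lastCases_castSucc, Fin.lastCases_last]
    have tl : ∀ a c : ℝ, s / d * (a / Real.sqrt s) * (c / Real.sqrt s) = a * c / d := by
      intro a c
      have h9 : s / d * (a / Real.sqrt s) * (c / Real.sqrt s)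
          = a * c / d * (s / (Real.sqrt s * Real.sqrt s)) := by ring
      rw [h9, hss, div_self hspos.ne', mul_one]
    rw [tl]
    induction k using Fin.lastCases with
    | last =>
      simp only [Fin.snoc_last, mul_zero, zero_mul, Finset.sum_const_zero, zero_add]
      rw [hvL, hsym]
      rw [← hvi l]
      field_simp
    | cast j =>
      induction l using Fin.lastCases with
      | last =>
        simp only [Fin.snoc_last, mul_zero, Finset.sum_const_zero, zero_add]
        rw [hvL, ← hvi j.castSucc]
        field_simp
      | cast j' =>
        simp only [Fin.snoc_castSucc]
        have := hSentry j j'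
        simp only [hS, Matrix.of_apply] at this
        have h2 : D j.castSucc j'.castSucc
            = (∑ γ, lam γ * u γ j * u γ j') + v j.castSucc * v j'.castSucc / d := by
          rw [← this]; ring
        rw [h2]
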